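/- Theorem 3.1, mass conservation part (fully discrete scheme): Let Δt > 0, M > 0, β > 0, and let Ψ^n, Ψ^{n+1}, Z^n, Z^{n+1}, W^{n+1/2} be grid functions with W^{n+1/2} satisfying the discrete Neumann BC, such that at all interior cells i = 1,...,N_x, j = 1,...,N_y: Ψ^{n+1} - Ψ^n + βΔt Ψ^{n+1/2} = MΔt Δ_h W^{n+1/2} and Δt Ψ^{n+1/2} = Z^{n+1} - Z^n, where Ψ^{n+1/2} = (Ψ^{n+1} + Ψ^n)/2. Then (1 + (β/2)Δt)(Ψ^{n+1}, 1)_m = (1 - (β/2)Δt)(Ψ^n, 1)_m; consequently, if (Ψ^n, 1)_m = 0 then (Ψ^{n+1}, 1)_m = 0 and (Z^{n+1}, 1)_m = (Z^n, 1)_m. -/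
import Mathlib


open Finset

/-- Discrete inner product `(f,g)_m` over interior cells `i = 1,...,Nx`, `j = 1,...,Ny`. -/
noncomputable def innerM (Nx Ny : ℕ) (hx hy : ℝ) (f g : ℕ → ℕ → ℝ) : ℝ :=
  ∑ i ∈ Finset.Icc 1 Nx, ∑ j ∈ Finset.Icc 1 Ny, hx * hy * f i j * g i j

/-- Discrete inner product `(u,v)_x` for x-edge arrays; index `i` stands for `i + 1/2`. -/
noncomputable def innerX (Nx Ny : ℕ) (hx hy : ℝ) (u v : ℕ → ℕ → ℝ) : ℝ :=
  ∑ i ∈ Finset.Icc 1 (Nx - 1), ∑ j ∈ Finset.Icc 1 Ny, hx * hy * u i j * v i j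

/-- Discrete inner product `(u,v)_y` for y-edge arrays; index `j` stands for `j + 1/2`. -/
noncomputable def innerY (Nx Ny : ℕ) (hx hy : ℝ) (u v : ℕ → ℕ → ℝ) : ℝ :=
  ∑ i ∈ Finset.Icc 1 Nx, ∑ j ∈ Finset.Icc 1 (Ny - 1), hx * hy * u i j * v i j

/-- `[d_x g]_{i+1/2, j}`, stored at index `(i, j)`. -/
noncomputable def dX (hx : ℝ) (g : ℕ → ℕ → ℝ) : ℕ → ℕ → ℝ := fun i j => (g (i + 1) j - g i j) / hx

/-- `[d_y g]_{i, j+1/2}`, stored at index `(i, j)`. -/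
noncomputable def dY (hy : ℝ) (g : ℕ → ℕ → ℝ) : ℕ → ℕ → ℝ := fun i j => (g i (j + 1) - g i j) / hy

/-- `[D_x w]_{i,j} = (w_{i+1/2,j} - w_{i-1/2,j})/h_x` for an x-edge array `w`. -/
noncomputable def DX (hx : ℝ) (w : ℕ → ℕ → ℝ) : ℕ → ℕ → ℝ := fun i j => (w i j - w (i - 1) j) / hx

/-- `[D_y w]_{i,j} = (w_{i,j+1/2} - w_{i,j-1/2})/h_y` for a y-edge array `w`. -/
noncomputable def DY (hy : ℝ) (w : ℕ → ℕ → ℝ) : ℕ → ℕ → ℝ := fun i j => (w i j - w i (j - 1)) / hy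

/-- Five-point discrete Laplacian `[Δ_h g]_{i,j}` (meaningful at interior cells). -/
noncomputable def lapH (hx hy : ℝ) (g : ℕ → ℕ → ℝ) : ℕ → ℕ → ℝ := fun i j =>
  (g (i + 1) j - 2 * g i j + g (i - 1) j) / hx ^ 2 +
  (g i (j + 1) - 2 * g i j + g i (j - 1)) / hy ^ 2

/-- The discrete homogeneous Neumann boundary condition for a grid function. -/
noncomputable def NeumannBC (Nx Ny : ℕ) (g : ℕ → ℕ → ℝ) : Prop :=
  (∀ j ∈ Finset.Icc 1 Ny, g 0 j = g 1 j ∧ g (Nx + 1) j = g Nx j) ∧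
  (∀ i ∈ Finset.Icc 1 Nx, g i 0 = g i 1 ∧ g i (Ny + 1) = g i Ny)

/-- Extension of interior data to ghost cells via the discrete Neumann BC
(clamping of indices to the interior range). -/
noncomputable def extN (Nx Ny : ℕ) (u : ℕ → ℕ → ℝ) : ℕ → ℕ → ℝ := fun i j =>
  u (min (max i 1) Nx) (min (max j 1) Ny)

/-- `‖∇_h g‖² = (d_x g, d_x g)_x + (d_y g, d_y g)_y`. -/
noncomputable def gradSq (Nx Ny : ℕ) (hx hy : ℝ) (g : ℕ → ℕ → ℝ) : ℝ :=
  innerX Nx Ny hx hy (dX hx g) (dX hx g) + innerY Nx Ny hx hy (dY hy g) (dY hy g)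

/-- `Δ_h² g`, where `Δ_h g` is extended to ghost cells via its own Neumann BC. -/
noncomputable def lap2H (Nx Ny : ℕ) (hx hy : ℝ) (g : ℕ → ℕ → ℝ) : ℕ → ℕ → ℝ :=
  lapH hx hy (extN Nx Ny (lapH hx hy g))

/-- `Δ_h³ g`, where `Δ_h g`, `Δ_h² g` are extended to ghost cells via their own Neumann BC. -/
noncomputable def lap3H (Nx Ny : ℕ) (hx hy : ℝ) (g : ℕ → ℕ → ℝ) : ℕ → ℕ → ℝ :=
  lapH hx hy (extN Nx Ny (lap2H Nx Ny hx hy g))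

/-- Discrete energy `E_1^h(g) = Σ h_x h_y F(g_{ij})` with `F(s) = s⁴/4`. -/
noncomputable def E1h (Nx Ny : ℕ) (hx hy : ℝ) (g : ℕ → ℕ → ℝ) : ℝ :=
  ∑ i ∈ Finset.Icc 1 Nx, ∑ j ∈ Finset.Icc 1 Ny, hx * hy * (g i j ^ 4 / 4)

/-- Theorem 3.1, mass conservation part (fully discrete scheme):
`(1 + (β/2)Δt)(Ψ^{n+1}, 1)_m = (1 - (β/2)Δt)(Ψ^n, 1)_m`; consequently, if
`(Ψ^n, 1)_m = 0` then `(Ψ^{n+1}, 1)_m = 0` and `(Z^{n+1}, 1)_m = (Z^n, 1)_m`. -/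
lemma telescope2 (f : ℕ → ℝ) (N : ℕ) :
    ∑ i ∈ Finset.Icc 1 N, (f (i + 1) - 2 * f i + f (i - 1)) =
      (f (N + 1) - f N) - (f 1 - f 0) := by
  induction N with
  | zero => simp
  | succ n ih =>
    rw [Finset.sum_Icc_succ_top (by omega : 1 ≤ n + 1), ih]
    simp only [Nat.add_sub_cancel]
    ring

theorem fully_discrete_mass_conservation
    (Nx Ny : ℕ) (hNx : 1 ≤ Nx) (hNy : 1 ≤ Ny)
    (hx hy : ℝ) (hhx : 0 < hx) (hhy : 0 < hy)
    (Δt M β : ℝ) (hΔt : 0 < Δt) (hM : 0 < M) (hβ : 0 < β)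
    (Ψn Ψp Zn Zp W : ℕ → ℕ → ℝ)
    (hW : NeumannBC Nx Ny W)
    (heq1 : ∀ i ∈ Finset.Icc 1 Nx, ∀ j ∈ Finset.Icc 1 Ny,
      Ψp i j - Ψn i j + β * Δt * ((Ψp i j + Ψn i j) / 2) = M * Δt * lapH hx hy W i j)
    (heq2 : ∀ i ∈ Finset.Icc 1 Nx, ∀ j ∈ Finset.Icc 1 Ny,
      Δt * ((Ψp i j + Ψn i j) / 2) = Zp i j - Zn i j) :
    (1 + β / 2 * Δt) * innerM Nx Ny hx hy Ψp (fun _ _ => 1) =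
      (1 - β / 2 * Δt) * innerM Nx Ny hx hy Ψn (fun _ _ => 1) ∧
    (innerM Nx Ny hx hy Ψn (fun _ _ => 1) = 0 →
      innerM Nx Ny hx hy Ψp (fun _ _ => 1) = 0 ∧
      innerM Nx Ny hx hy Zp (fun _ _ => 1) = innerM Nx Ny hx hy Zn (fun _ _ => 1)) := by
  set Sp := innerM Nx Ny hx hy Ψp (fun _ _ => 1) with hSp
  set Sn := innerM Nx Ny hx hy Ψn (fun _ _ => 1) with hSn
  have hlap : ∑ i ∈ Finset.Icc 1 Nx, ∑ j ∈ Finset.Icc 1 Ny, lapH hx hy W i j = 0 := by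
    have hxpart : ∑ i ∈ Finset.Icc 1 Nx, ∑ j ∈ Finset.Icc 1 Ny,
        (W (i + 1) j - 2 * W i j + W (i - 1) j) / hx ^ 2 = 0 := by
      rw [Finset.sum_comm]
      apply Finset.sum_eq_zero
      intro j hj
      rw [← Finset.sum_div]
      rw [telescope2 (fun i => W i j) Nx]
      have h1 := (hW.1 j hj).1
      have h2 := (hW.1 j hj).2
      simp [h1, h2]
    have hypart : ∑ i ∈ Finset.Icc 1 Nx, ∑ j ∈ Finset.Icc 1 Ny,
        (W i (j + 1) - 2 * W i j + W i (j - 1)) / hy ^ 2 = 0 := by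
      apply Finset.sum_eq_zero
      intro i hi
      rw [← Finset.sum_div]
      rw [telescope2 (fun j => W i j) Ny]
      have h1 := (hW.2 i hi).1
      have h2 := (hW.2 i hi).2
      simp [h1, h2]
    simp only [lapH, Finset.sum_add_distrib, hxpart, hypart, add_zero]
  have key : (1 + β / 2 * Δt) * Sp = (1 - β / 2 * Δt) * Sn := by
    have hsum : ∑ i ∈ Finset.Icc 1 Nx, ∑ j ∈ Finset.Icc 1 Ny,
        hx * hy * (Ψp i j - Ψn i j + β * Δt * ((Ψp i j + Ψn i j) / 2)) =
        ∑ i ∈ Finset.Icc 1 Nx, ∑ j ∈ Finset.Icc 1 Ny,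
        hx * hy * (M * Δt * lapH hx hy W i j) := by
      apply Finset.sum_congr rfl; intro i hi
      apply Finset.sum_congr rfl; intro j hj
      rw [heq1 i hi j hj]
    have hrhs : ∑ i ∈ Finset.Icc 1 Nx, ∑ j ∈ Finset.Icc 1 Ny,
        hx * hy * (M * Δt * lapH hx hy W i j) = 0 := by
      have : ∑ i ∈ Finset.Icc 1 Nx, ∑ j ∈ Finset.Icc 1 Ny,
          hx * hy * (M * Δt * lapH hx hy W i j) =
          hx * hy * (M * Δt) * ∑ i ∈ Finset.Icc 1 Nx, ∑ j ∈ Finset.Icc 1 Ny,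
          lapH hx hy W i j := by
        rw [Finset.mul_sum]
        apply Finset.sum_congr rfl; intro i _
        rw [Finset.mul_sum]
        apply Finset.sum_congr rfl; intro j _
        ring
      rw [this, hlap, mul_zero]
    rw [hrhs] at hsum
    have expand : ∀ i j : ℕ, hx * hy * (Ψp i j - Ψn i j + β * Δt * ((Ψp i j + Ψn i j) / 2)) =
        (1 + β / 2 * Δt) * (hx * hy * Ψp i j * 1) - (1 - β / 2 * Δt) * (hx * hy * Ψn i j * 1) := by
      intro i j; ring
    simp only [expand] at hsum
    simp only [Finset.sum_sub_distrib, ← Finset.mul_sum] at hsum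
    rw [hSp, hSn, innerM, innerM]
    linarith [hsum]
  refine ⟨key, fun h0 => ?_⟩
  have hpos : (0:ℝ) < 1 + β / 2 * Δt := by positivity
  have hSp0 : Sp = 0 := by
    have := key
    rw [h0, mul_zero] at this
    exact (mul_eq_zero.mp this).resolve_left (ne_of_gt hpos)
  refine ⟨hSp0, ?_⟩
  have hZ : ∑ i ∈ Finset.Icc 1 Nx, ∑ j ∈ Finset.Icc 1 Ny,
      hx * hy * (Zp i j - Zn i j) = Δt / 2 * (Sp + Sn) := by
    have : ∀ i ∈ Finset.Icc 1 Nx, ∀ j ∈ Finset.Icc 1 Ny,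
        hx * hy * (Zp i j - Zn i j) =
        Δt / 2 * (hx * hy * Ψp i j * 1 + hx * hy * Ψn i j * 1) := by
      intro i hi j hj
      rw [← heq2 i hi j hj]; ring
    rw [Finset.sum_congr rfl fun i hi => Finset.sum_congr rfl fun j hj => this i hi j hj]
    rw [hSp, hSn, innerM, innerM]
    rw [mul_add, Finset.mul_sum, Finset.mul_sum, ← Finset.sum_add_distrib]
    apply Finset.sum_congr rfl; intro i _
    rw [Finset.mul_sum, Finset.mul_sum, ← Finset.sum_add_distrib]
    apply Finset.sum_congr rfl; intro j _
    ring
  rw [hSp0, h0, add_zero, mul_zero] at hZ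
  have : innerM Nx Ny hx hy Zp (fun _ _ => 1) - innerM Nx Ny hx hy Zn (fun _ _ => 1) = 0 := by
    rw [innerM, innerM, ← Finset.sum_sub_distrib]
    rw [← hZ]
    apply Finset.sum_congr rfl; intro i _
    rw [← Finset.sum_sub_distrib]
    apply Finset.sum_congr rfl; intro j _
    ring
  linarith
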